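/- With the I-derivative ∇^{I;a,b}_V as in (3.14), one has the consistency I^{b,c}_y ∘ ∇^{I;a,b}_V = ∇^{I;a,c}_V, and consequently ∇^{I;b,c}_V ∘ ∇^{I;a,b}_W ≡ 0. -/
import Mathlib


/-- The derivative `∇^{I;a,b}_V` of equation (3.14), obtained by differentiating the
transport along the flow `ε ↦ x + ε·V(x)` of the vector field `V`. -/
noncomputable def nablaI {Λ H E : Type*} [NormedAddCommGroup H] [NormedSpace ℝ H]
    [NormedAddCommGroup E] [NormedSpace ℝ E]
    (I : Λ → Λ → H → H → E → E) (a b : Λ) (V : H → H) (T : H → E) (x z : H) : E :=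
  deriv (fun ε : ℝ => I a b (x + ε • V x) z (T (x + ε • V x))) 0

lemma nablaI_consist {Λ H E : Type*} [NormedAddCommGroup H] [NormedSpace ℝ H]
    [NormedAddCommGroup E] [NormedSpace ℝ E]
    (I : Λ → Λ → H → H → E → E)
    (hcomp : ∀ (a b c : Λ) (x y z : H) (v : E), I b c y z (I a b x y v) = I a c x z v)
    (hlin : ∀ (a b : Λ) (x y : H), IsBoundedLinearMap ℝ (I a b x y))
    (V : H → H) (a b c : Λ) (T : H → E)
    (hdiff : ∀ x z : H,
      DifferentiableAt ℝ (fun ε : ℝ => I a b (x + ε • V x) z (T (x + ε • V x))) 0)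
    (x y z : H) : I b c y z (nablaI I a b V T x y) = nablaI I a c V T x z := by
  set L := (hlin b c y z).toContinuousLinearMap with hL
  have hLv : ∀ v : E, L v = I b c y z v := fun v => rfl
  have hf := (hdiff x y).hasDerivAt
  have h2 : HasDerivAt (fun ε : ℝ => L (I a b (x + ε • V x) y (T (x + ε • V x))))
      (L (deriv (fun ε : ℝ => I a b (x + ε • V x) y (T (x + ε • V x))) 0)) 0 :=
    L.hasFDerivAt.comp_hasDerivAt 0 hf
  simp only [hLv, hcomp] at h2
  unfold nablaI
  rw [← h2.deriv]

/-- Equations (3.17) and (3.16) of Proposition 3.3: `I^{b,c}_y ∘ ∇^{I;a,b}_V = ∇^{I;a,c}_V`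
(consistency), and consequently `∇^{I;b,c}_V ∘ ∇^{I;a,b}_W ≡ 0`. -/
theorem nablaI_consistent_and_square_zero {Λ H E : Type*}
    [NormedAddCommGroup H] [NormedSpace ℝ H] [NormedAddCommGroup E] [NormedSpace ℝ E]
    (I : Λ → Λ → H → H → E → E)
    (hcomp : ∀ (a b c : Λ) (x y z : H) (v : E), I b c y z (I a b x y v) = I a c x z v)
    (hid : ∀ (a : Λ) (x : H) (v : E), I a a x x v = v)
    -- linearity (3.11) and continuity of the C¹ transports
    (hlin : ∀ (a b : Λ) (x y : H), IsBoundedLinearMap ℝ (I a b x y))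
    (V W : H → H) (a b c : Λ) (T : H → E)
    -- C¹ smoothness of the transports and of the section along the flows of `V` and `W`
    (hdiffV : ∀ x z : H,
      DifferentiableAt ℝ (fun ε : ℝ => I a b (x + ε • V x) z (T (x + ε • V x))) 0)
    (hdiffW : ∀ x z : H,
      DifferentiableAt ℝ (fun ε : ℝ => I a b (x + ε • W x) z (T (x + ε • W x))) 0) :
    -- (3.17): `I^{b,c}_y ∘ ∇^{I;a,b}_V = ∇^{I;a,c}_V`
    (∀ x y z : H, I b c y z (nablaI I a b V T x y) = nablaI I a c V T x z) ∧
    -- (3.16): `∇^{I;b,c}_V ∘ ∇^{I;a,b}_W ≡ 0`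
    (∀ x x' z : H, nablaI I b c V (fun y => nablaI I a b W T x y) x' z = 0) := by
  have h17 : ∀ (V : H → H)
      (hdiff : ∀ x z : H,
        DifferentiableAt ℝ (fun ε : ℝ => I a b (x + ε • V x) z (T (x + ε • V x))) 0)
      (c : Λ) (x y z : H), I b c y z (nablaI I a b V T x y) = nablaI I a c V T x z :=
    fun V hdiff c x y z => nablaI_consist I hcomp hlin V a b c T hdiff x y z
  refine ⟨h17 V hdiffV c, ?_⟩
  intro x x' z
  -- the section `y ↦ ∇^{I;a,b}_W T x y` is a transported constant
  have hg : ∀ y : H, nablaI I a b W T x y = I c b z y (nablaI I a c W T x z) := by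
    intro y
    rw [← h17 W hdiffW c x y z, hcomp, hid]
  have : (fun ε : ℝ => I b c (x' + ε • V x') z
      ((fun y => nablaI I a b W T x y) (x' + ε • V x'))) =
      fun _ : ℝ => I c c z z (nablaI I a c W T x z) := by
    funext ε
    simp only [hg, hcomp]
  show deriv (fun ε : ℝ => I b c (x' + ε • V x') z
      ((fun y => nablaI I a b W T x y) (x' + ε • V x'))) 0 = 0
  rw [this, deriv_const]
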